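/- With f(V) = −trace(Vᵀ A V (Vᵀ B V)^{-1}) + α trace(Vᵀ Ã V (Vᵀ B̃ V)^{-1}) and the Euclidean gradient D f(V) as computed, we have Vᵀ (∂f/∂V) = 0 for every full-rank V; consequently the Riemannian gradient of f on the Stiefel manifold, grad f(V) = Df(V) − V·sym(Vᵀ Df(V)), equals the Euclidean derivative Df(V). -/

import Mathlib

open Matrix

lemma aux_posdef {p d : ℕ} {B : Matrix (Fin p) (Fin p) ℝ} (hB : B.PosDef)
    (V : Matrix (Fin p) (Fin d) ℝ) (hV : Vᵀ * V = 1) : (Vᵀ * B * V).PosDef := by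
  rw [posDef_iff_dotProduct_mulVec]
  constructor
  · show (Vᵀ * B * V)ᴴ = _
    have hBs : Bᵀ = B := by
      have := hB.1.eq
      simpa using this
    rw [conjTranspose_mul, conjTranspose_mul]
    simp [hBs, Matrix.mul_assoc]
  · intro x hx
    have hVx : V *ᵥ x ≠ 0 := by
      intro h
      have : Vᵀ *ᵥ (V *ᵥ x) = 0 := by rw [h, mulVec_zero]
      rw [mulVec_mulVec, hV, one_mulVec] at this
      exact hx this
    have h := hB.dotProduct_mulVec_pos hVx
    have e : (Vᵀ * B * V) *ᵥ x = Vᵀ *ᵥ (B *ᵥ (V *ᵥ x)) := by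
      rw [mulVec_mulVec, mulVec_mulVec]
    simpa [e, dotProduct_mulVec, ← vecMul_vecMul, vecMul_transpose] using h

lemma aux_inv {p d : ℕ} {B : Matrix (Fin p) (Fin p) ℝ} (hB : B.PosDef)
    (V : Matrix (Fin p) (Fin d) ℝ) (hV : Vᵀ * V = 1) :
    (Vᵀ * B * V) * (Vᵀ * B * V)⁻¹ = 1 :=
  Matrix.mul_nonsing_inv _ (isUnit_iff_ne_zero.2 (aux_posdef hB V hV).det_pos.ne')

/-- On the Stiefel manifold, the Euclidean derivative `Df(V)` of the CIR loss
satisfies `Vᵀ Df(V) = 0`; consequently the Riemannian gradient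
`Df(V) − V·sym(Vᵀ Df(V))` equals `Df(V)`. -/
theorem stmt_8 {p d : ℕ} (A At B Bt : Matrix (Fin p) (Fin p) ℝ)
    (hA : A.IsSymm) (hAt : At.IsSymm) (hB : B.PosDef) (hBt : Bt.PosDef)
    (α : ℝ) (hα : 0 ≤ α)
    (V : Matrix (Fin p) (Fin d) ℝ) (hV : Vᵀ * V = 1) :
    let Df : Matrix (Fin p) (Fin d) ℝ :=
      -((2 : ℝ) • (A * V * (Vᵀ * B * V)⁻¹))
        + (2 : ℝ) • (B * V * (Vᵀ * B * V)⁻¹ * (Vᵀ * A * V) * (Vᵀ * B * V)⁻¹)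
        + (2 * α) • (At * V * (Vᵀ * Bt * V)⁻¹
            - Bt * V * (Vᵀ * Bt * V)⁻¹ * (Vᵀ * At * V) * (Vᵀ * Bt * V)⁻¹)
    Vᵀ * Df = 0 ∧ Df - V * ((1 / 2 : ℝ) • (Vᵀ * Df + (Vᵀ * Df)ᵀ)) = Df := by
  intro Df
  have hBinv := aux_inv hB V hV
  have hBtinv := aux_inv hBt V hV
  have key : Vᵀ * Df = 0 := by
    show Vᵀ * (-((2 : ℝ) • (A * V * (Vᵀ * B * V)⁻¹))
        + (2 : ℝ) • (B * V * (Vᵀ * B * V)⁻¹ * (Vᵀ * A * V) * (Vᵀ * B * V)⁻¹)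
        + (2 * α) • (At * V * (Vᵀ * Bt * V)⁻¹
            - Bt * V * (Vᵀ * Bt * V)⁻¹ * (Vᵀ * At * V) * (Vᵀ * Bt * V)⁻¹)) = 0
    rw [Matrix.mul_add, Matrix.mul_add, Matrix.mul_neg, Matrix.mul_smul, Matrix.mul_smul,
      Matrix.mul_smul, Matrix.mul_sub]
    have h1 : Vᵀ * (B * V * (Vᵀ * B * V)⁻¹ * (Vᵀ * A * V) * (Vᵀ * B * V)⁻¹)
        = Vᵀ * (A * V * (Vᵀ * B * V)⁻¹) := by
      calc Vᵀ * (B * V * (Vᵀ * B * V)⁻¹ * (Vᵀ * A * V) * (Vᵀ * B * V)⁻¹)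
          = ((Vᵀ * B * V) * (Vᵀ * B * V)⁻¹) * (Vᵀ * A * V) * (Vᵀ * B * V)⁻¹ := by
            simp only [Matrix.mul_assoc]
        _ = Vᵀ * (A * V * (Vᵀ * B * V)⁻¹) := by
            rw [hBinv, Matrix.one_mul]; simp only [Matrix.mul_assoc]
    have h2 : Vᵀ * (Bt * V * (Vᵀ * Bt * V)⁻¹ * (Vᵀ * At * V) * (Vᵀ * Bt * V)⁻¹)
        = Vᵀ * (At * V * (Vᵀ * Bt * V)⁻¹) := by
      calc Vᵀ * (Bt * V * (Vᵀ * Bt * V)⁻¹ * (Vᵀ * At * V) * (Vᵀ * Bt * V)⁻¹)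
          = ((Vᵀ * Bt * V) * (Vᵀ * Bt * V)⁻¹) * (Vᵀ * At * V) * (Vᵀ * Bt * V)⁻¹ := by
            simp only [Matrix.mul_assoc]
        _ = Vᵀ * (At * V * (Vᵀ * Bt * V)⁻¹) := by
            rw [hBtinv, Matrix.one_mul]; simp only [Matrix.mul_assoc]
    rw [h1, h2]
    simp
  refine ⟨key, ?_⟩
  rw [key]
  simp
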